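/- Let a, l, D be integers with a, l > 0, and suppose (t₀, m₀) ∈ ℤ² satisfies t₀² = 4·a·l·m₀² + D. If (r, s) ∈ ℤ² satisfies r² - 16·a³·l·s² = 1, then m = r²·m₀ + 16·a³·l·s²·m₀ + 4·a·r·s·t₀ and t = r²·t₀ + 16·a²·l·s·r·m₀ + 16·a³·s²·l·t₀ satisfy t² = 4·a·l·m² + D, and moreover m ≡ m₀ (mod 2a) and t ≡ t₀ (mod 2a). -/
import Mathlib

/-- The explicit Pell transformation producing new solutions of `t² = 4·a·l·m² + D`
from an old one, preserving congruences mod `2a`. -/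
theorem pell_transformation (a l D t₀ m₀ r s : ℤ) (ha : 0 < a) (hl : 0 < l)
    (h₀ : t₀ ^ 2 = 4 * a * l * m₀ ^ 2 + D)
    (hrs : r ^ 2 - 16 * a ^ 3 * l * s ^ 2 = 1) :
    (r ^ 2 * t₀ + 16 * a ^ 2 * l * s * r * m₀ + 16 * a ^ 3 * s ^ 2 * l * t₀) ^ 2 =
        4 * a * l * (r ^ 2 * m₀ + 16 * a ^ 3 * l * s ^ 2 * m₀ + 4 * a * r * s * t₀) ^ 2 + D ∧
      r ^ 2 * m₀ + 16 * a ^ 3 * l * s ^ 2 * m₀ + 4 * a * r * s * t₀ ≡ m₀ [ZMOD (2 * a)] ∧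
      r ^ 2 * t₀ + 16 * a ^ 2 * l * s * r * m₀ + 16 * a ^ 3 * s ^ 2 * l * t₀ ≡ t₀ [ZMOD (2 * a)] := by
  have hr2 : r ^ 2 = 1 + 16 * a ^ 3 * l * s ^ 2 := by linarith
  refine ⟨?_, ?_, ?_⟩
  · linear_combination (r ^ 2 - 16 * a ^ 3 * l * s ^ 2) ^ 2 * h₀ +
      (r ^ 2 - 16 * a ^ 3 * l * s ^ 2 + 1) * D * hrs
  · exact (Int.modEq_iff_dvd.mpr
      ⟨16 * a ^ 2 * l * s ^ 2 * m₀ + 2 * r * s * t₀, by linear_combination m₀ * hr2⟩).symm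
  · exact (Int.modEq_iff_dvd.mpr
      ⟨16 * a ^ 2 * l * s ^ 2 * t₀ + 8 * a * l * s * r * m₀, by linear_combination t₀ * hr2⟩).symm
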